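/- For the energy-saving building problem: let A₁, A₂, λ > 0 with λa < A₁ and λa < A₂, and define y₁(t) = (1/λ)(√(A₁² − λ²t²) − √(A₁² − λ²a²)) and y₂(t) = −(1/λ)(√(A₂² − λ²t²) − √(A₂² − λ²a²)) on [−a, a]. Then y₁(±a) = y₂(±a) = 0, and y₁, y₂ satisfy on (−a,a) the Euler–Lagrange system −A₁ ÿ₁/(1+ẏ₁²)^{3/2} − λ = 0 and −A₂ ÿ₂/(1+ẏ₂²)^{3/2} + λ = 0. -/

import Mathlib

lemma aux18 (A lam C : ℝ) (hA : 0 < A) (hl : 0 < lam)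
    (y : ℝ → ℝ)
    (hy : y = fun t => (1/lam) * (Real.sqrt (A^2 - lam^2*t^2) - C))
    (t : ℝ) (ht : lam^2 * t^2 < A^2) :
    -A * deriv (deriv y) t / (1 + (deriv y t)^2) ^ ((3:ℝ)/2) = lam := by
  set U : Set ℝ := {x | lam^2*x^2 < A^2} with hUdef
  have hU : IsOpen U := isOpen_lt (by fun_prop) continuous_const
  set g : ℝ → ℝ := fun x => -lam * x / Real.sqrt (A^2 - lam^2*x^2) with hgdef
  have hder : ∀ x ∈ U, HasDerivAt y (g x) x := by
    intro x hx
    have hs : 0 < A^2 - lam^2*x^2 := sub_pos.mpr hx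
    have hsq : Real.sqrt (A^2 - lam^2*x^2) ≠ 0 :=
      ne_of_gt (Real.sqrt_pos.mpr hs)
    have h1 : HasDerivAt (fun x : ℝ => A^2 - lam^2*x^2) (-(lam^2*(2*x))) x := by
      have := ((hasDerivAt_pow 2 x).const_mul (lam^2)).const_sub (A^2)
      simpa using this
    have h2 := h1.sqrt (ne_of_gt hs)
    have h3 := (h2.sub_const C).const_mul (1/lam)
    rw [hy]
    refine h3.congr_deriv (Eq.symm ?_)
    simp only [hgdef]
    field_simp [hgdef]
  have hderiv_eq : Set.EqOn (deriv y) g U := fun x hx => (hder x hx).deriv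
  have htU : t ∈ U := ht
  have hev : deriv y =ᶠ[nhds t] g :=
    Filter.eventuallyEq_of_mem (hU.mem_nhds htU) hderiv_eq
  have hs : 0 < A^2 - lam^2*t^2 := sub_pos.mpr ht
  set s : ℝ := A^2 - lam^2*t^2 with hsdef
  have hsqpos : 0 < Real.sqrt s := Real.sqrt_pos.mpr hs
  have hsq : Real.sqrt s ≠ 0 := ne_of_gt hsqpos
  have hmul : Real.sqrt s * Real.sqrt s = s := Real.mul_self_sqrt hs.le
  have hg' : HasDerivAt g (-(lam*A^2) / (s * Real.sqrt s)) t := by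
    have hf : HasDerivAt (fun x : ℝ => -lam * x) (-lam) t := by
      simpa using (hasDerivAt_id t).const_mul (-lam)
    have h1 : HasDerivAt (fun x : ℝ => A^2 - lam^2*x^2) (-(lam^2*(2*t))) t := by
      have := ((hasDerivAt_pow 2 t).const_mul (lam^2)).const_sub (A^2)
      simpa using this
    have h2 := h1.sqrt (ne_of_gt hs)
    have h3 := hf.div h2 hsq
    refine h3.congr_deriv (Eq.symm ?_)
    rw [← hsdef]
    rw [div_eq_div_iff (by positivity) (by positivity)]
    field_simp
    linear_combination (-lam^2*t^2) * ((Real.sq_sqrt hs.le).trans hsdef)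
  have hdd : deriv (deriv y) t = -(lam*A^2)/(s * Real.sqrt s) := by
    rw [hev.deriv_eq, hg'.deriv]
  have hdy : deriv y t = g t := hderiv_eq htU
  have h1g : 1 + (g t)^2 = A^2 / s := by
    simp only [hgdef]
    rw [← hsdef, div_pow, Real.sq_sqrt hs.le]
    field_simp
    linarith [hsdef]
  have hx0 : (0:ℝ) ≤ A / Real.sqrt s := by positivity
  have hrpow : (A^2 / s) ^ ((3:ℝ)/2) = A^3 / (s * Real.sqrt s) := by
    have hAs : A^2 / s = (A / Real.sqrt s)^2 := by
      rw [div_pow]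
      congr 1
      nlinarith [hmul]
    rw [hAs, ← Real.rpow_natCast (A / Real.sqrt s) 2, ← Real.rpow_mul hx0]
    have h5 : ((2:ℕ):ℝ) * ((3:ℝ)/2) = ((3:ℕ):ℝ) := by norm_num
    rw [h5, Real.rpow_natCast, div_pow]
    congr 1
    linear_combination Real.sqrt s * hmul
  rw [hdd, hdy, h1g, hrpow]
  field_simp

/-- energy-saving buildings: the explicit curves
`y₁(t) = (1/λ)(√(A₁² − λ²t²) − √(A₁² − λ²a²))` and
`y₂(t) = −(1/λ)(√(A₂² − λ²t²) − √(A₂² − λ²a²))` vanish at `±a` and satisfy on `(−a,a)`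
the Euler–Lagrange system `−A₁ ÿ₁/(1+ẏ₁²)^{3/2} − λ = 0`, `−A₂ ÿ₂/(1+ẏ₂²)^{3/2} + λ = 0`. -/
theorem stmt18 (a A₁ A₂ lam : ℝ) (ha : 0 < a)
    (hA₁ : 0 < A₁) (hA₂ : 0 < A₂) (hlam : 0 < lam)
    (h1 : lam * a < A₁) (h2 : lam * a < A₂)
    (y₁ y₂ : ℝ → ℝ)
    (hy₁ : ∀ t : ℝ, y₁ t =
      (1 / lam) * (Real.sqrt (A₁ ^ 2 - lam ^ 2 * t ^ 2) - Real.sqrt (A₁ ^ 2 - lam ^ 2 * a ^ 2)))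
    (hy₂ : ∀ t : ℝ, y₂ t =
      -(1 / lam) * (Real.sqrt (A₂ ^ 2 - lam ^ 2 * t ^ 2) - Real.sqrt (A₂ ^ 2 - lam ^ 2 * a ^ 2))) :
    y₁ (-a) = 0 ∧ y₁ a = 0 ∧ y₂ (-a) = 0 ∧ y₂ a = 0 ∧
    ∀ t ∈ Set.Ioo (-a) a,
      (-A₁ * deriv (deriv y₁) t / (1 + (deriv y₁ t) ^ 2) ^ ((3:ℝ)/2) - lam = 0) ∧
      (-A₂ * deriv (deriv y₂) t / (1 + (deriv y₂ t) ^ 2) ^ ((3:ℝ)/2) + lam = 0) := by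
  have hna : (-a : ℝ)^2 = a^2 := by ring
  refine ⟨by rw [hy₁, hna]; simp, by rw [hy₁]; simp,
    by rw [hy₂, hna]; simp, by rw [hy₂]; simp, ?_⟩
  intro t ht
  have ht2 : t^2 < a^2 := sq_lt_sq' ht.1 ht.2
  have htA₁ : lam^2 * t^2 < A₁^2 := by nlinarith [mul_pos hlam ha]
  have htA₂ : lam^2 * t^2 < A₂^2 := by nlinarith [mul_pos hlam ha]
  constructor
  · have key := aux18 A₁ lam (Real.sqrt (A₁^2 - lam^2*a^2)) hA₁ hlam y₁
      (funext fun x => by rw [hy₁ x]) t htA₁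
    linarith
  · set w : ℝ → ℝ :=
      fun x => (1/lam) * (Real.sqrt (A₂^2 - lam^2*x^2) - Real.sqrt (A₂^2 - lam^2*a^2)) with hwdef
    have hw : y₂ = fun x => -(w x) := funext fun x => by rw [hy₂ x, hwdef]; ring_nf
    have hd1 : deriv y₂ = fun x => -(deriv w x) := by
      funext x; rw [hw]; exact deriv.neg
    have hd2 : deriv (deriv y₂) t = -(deriv (deriv w) t) := by
      rw [hd1]; exact deriv.neg
    have hsq2 : (deriv y₂ t)^2 = (deriv w t)^2 := by rw [hd1]; simp
    have key := aux18 A₂ lam (Real.sqrt (A₂^2 - lam^2*a^2)) hA₂ hlam w rfl t htA₂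
    rw [hd2, hsq2]
    linear_combination -key
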